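/- Let χ : (0,∞)^d → ℝ be defined by χ(x) = Σ_{s ∈ S} w(s) x^s (multi-index notation), where S ⊆ {−1,0,1}^d is finite with positive weights w(s) > 0, and S is not contained in any closed half-space {y : ⟨x, y⟩ ≥ 0} with x ≠ 0. Then χ attains a global minimum on (0,∞)^d at a unique point x₀, and x₀ is the unique solution in (0,∞)^d of ∂χ/∂x₁ = ⋯ = ∂χ/∂x_d = 0. -/

import Mathlib

open Real Set

namespace Stmt10Aux

variable {d : ℕ}

/-- inner product of an integer step with a real vector -/
noncomputable def lin (s : Fin d → ℤ) (t : Fin d → ℝ) : ℝ := ∑ i, (s i : ℝ) * t i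

lemma lin_smul (s : Fin d → ℤ) (a : ℝ) (x : Fin d → ℝ) : lin s (a • x) = a * lin s x := by
  simp only [lin, Pi.smul_apply, smul_eq_mul, Finset.mul_sum]
  exact Finset.sum_congr rfl fun i _ => by ring

lemma lin_smul_add (s : Fin d → ℤ) (a b : ℝ) (x y : Fin d → ℝ) :
    lin s (a • x + b • y) = a * lin s x + b * lin s y := by
  simp only [lin, Pi.add_apply, Pi.smul_apply, smul_eq_mul, mul_add, Finset.mul_sum,
    ← Finset.sum_add_distrib]
  exact Finset.sum_congr rfl fun i _ => by ring

lemma lin_sub (s : Fin d → ℤ) (x y : Fin d → ℝ) : lin s (x - y) = lin s x - lin s y := by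
  simp only [lin, Pi.sub_apply, mul_sub, Finset.sum_sub_distrib]

lemma lin_continuous (s : Fin d → ℤ) : Continuous (lin s) := by
  unfold lin; fun_prop

lemma lin_differentiable (s : Fin d → ℤ) : Differentiable ℝ (lin s) := by
  unfold lin
  apply Differentiable.fun_sum
  intro i _
  exact (differentiable_apply i).const_mul _

/-- the exponential-coordinates version of the inventory -/
noncomputable def Fe (S : Finset (Fin d → ℤ)) (w : (Fin d → ℤ) → ℝ) : (Fin d → ℝ) → ℝ :=
  fun t => ∑ s ∈ S, w s * Real.exp (lin s t)

lemma exp_zpow (a : ℝ) (n : ℤ) : Real.exp a ^ n = Real.exp (n * a) := by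
  rw [← Real.rpow_intCast, Real.rpow_def_of_pos (Real.exp_pos a), Real.log_exp, mul_comm]

lemma chi_exp (S : Finset (Fin d → ℤ)) (w : (Fin d → ℤ) → ℝ) (t : Fin d → ℝ) :
    ∑ s ∈ S, w s * ∏ i, Real.exp (t i) ^ (s i) = Fe S w t := by
  refine Finset.sum_congr rfl fun s _ => ?_
  congr 1
  calc ∏ i, Real.exp (t i) ^ (s i) = ∏ i, Real.exp ((s i : ℝ) * t i) :=
        Finset.prod_congr rfl fun i _ => exp_zpow _ _
    _ = Real.exp (lin s t) := (Real.exp_sum _ _).symm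

lemma Fe_continuous (S : Finset (Fin d → ℤ)) (w : (Fin d → ℤ) → ℝ) :
    Continuous (Fe S w) := by
  unfold Fe
  exact continuous_finset_sum _ fun s _ => continuous_const.mul (lin_continuous s).rexp

lemma Fe_differentiable (S : Finset (Fin d → ℤ)) (w : (Fin d → ℤ) → ℝ) :
    Differentiable ℝ (Fe S w) := by
  unfold Fe
  apply Differentiable.fun_sum
  intro s _
  exact ((lin_differentiable s).exp).const_mul _

lemma Fe_strictConvexOn {S : Finset (Fin d → ℤ)} {w : (Fin d → ℤ) → ℝ}
    (hw : ∀ s ∈ S, 0 < w s)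
    (hspan : ∀ v : Fin d → ℝ, v ≠ 0 → ∃ s ∈ S, lin s v ≠ 0) :
    StrictConvexOn ℝ Set.univ (Fe S w) := by
  refine ⟨convex_univ, ?_⟩
  intro x _ y _ hxy a b ha hb hab
  obtain ⟨s₀, hs₀S, hs₀⟩ := hspan (x - y) (sub_ne_zero.2 hxy)
  rw [lin_sub, sub_ne_zero] at hs₀
  have hRHS : a • Fe S w x + b • Fe S w y
      = ∑ s ∈ S, (a * (w s * Real.exp (lin s x)) + b * (w s * Real.exp (lin s y))) := by
    simp only [Fe, smul_eq_mul, Finset.mul_sum, Finset.sum_add_distrib]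
  rw [hRHS]
  have hLHS : Fe S w (a • x + b • y)
      = ∑ s ∈ S, w s * Real.exp (a * lin s x + b * lin s y) := by
    simp only [Fe, lin_smul_add]
  rw [hLHS]
  refine Finset.sum_lt_sum (fun s hs => ?_) ⟨s₀, hs₀S, ?_⟩
  · have hcv := convexOn_exp.2 (mem_univ (lin s x)) (mem_univ (lin s y)) ha.le hb.le hab
    simp only [smul_eq_mul] at hcv
    have := hw s hs
    nlinarith [Real.exp_pos (a * lin s x + b * lin s y)]
  · have hcv := strictConvexOn_exp.2 (mem_univ (lin s₀ x)) (mem_univ (lin s₀ y)) hs₀ ha hb hab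
    simp only [smul_eq_mul] at hcv
    have := hw s₀ hs₀S
    nlinarith

lemma isMinOn_of_fderiv_zero {f : (Fin d → ℝ) → ℝ} (hc : ConvexOn ℝ univ f)
    (hf : Differentiable ℝ f) {t : Fin d → ℝ} (ht : fderiv ℝ f t = 0) (t' : Fin d → ℝ) :
    f t ≤ f t' := by
  rcases eq_or_ne t' t with rfl | hne
  · exact le_rfl
  set v := t' - t with hv
  set φ : ℝ → ℝ := fun r => f (t + r • v) with hφ
  have hφc : ConvexOn ℝ univ φ := by
    have := hc.comp_affineMap (AffineMap.lineMap t t' : ℝ →ᵃ[ℝ] (Fin d → ℝ))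
    simp only [preimage_univ] at this
    refine (show φ = f ∘ (AffineMap.lineMap t t' : ℝ →ᵃ[ℝ] (Fin d → ℝ)) from ?_) ▸ this
    funext r
    simp [φ, AffineMap.lineMap_apply, hv]
    ring_nf
  have h1 : HasDerivAt (fun r : ℝ => t + r • v) v 0 := by
    simpa using ((hasDerivAt_id (0 : ℝ)).smul_const v).const_add t
  have h0 : t + (0 : ℝ) • v = t := by simp
  have hφd : HasDerivAt φ ((fderiv ℝ f t) v) 0 := by
    have := ((hf t).hasFDerivAt).comp_hasDerivAt_of_eq 0 h1 h0.symm
    exact this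
  rw [ht] at hφd
  simp only [ContinuousLinearMap.zero_apply] at hφd
  have hslope := hφc.le_slope_of_hasDerivAt (mem_univ (0 : ℝ)) (mem_univ (1 : ℝ))
    one_pos hφd
  rw [slope_def_field] at hslope
  have hφ0 : φ 0 = f t := by simp [φ]
  have hφ1 : φ 1 = f t' := by simp [φ, hv]
  rw [hφ0, hφ1] at hslope
  simpa using hslope

lemma chi_differentiableAt (S : Finset (Fin d → ℤ)) (w : (Fin d → ℤ) → ℝ)
    {x : Fin d → ℝ} (hx : ∀ i, x i ≠ 0) :
    DifferentiableAt ℝ (fun x : Fin d → ℝ => ∑ s ∈ S, w s * ∏ i, x i ^ (s i)) x := by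
  apply DifferentiableAt.fun_sum
  intro s _
  apply DifferentiableAt.const_mul
  have : ∀ i ∈ Finset.univ, DifferentiableAt ℝ (fun y : Fin d → ℝ => y i ^ (s i)) x :=
    fun i _ => DifferentiableAt.zpow (differentiableAt_fun_id.comp x ((differentiable_apply i) x))
      (Or.inl (hx i))
  exact (HasFDerivAt.finset_prod (fun i hi => (this i hi).hasFDerivAt)).differentiableAt

lemma E_differentiable :
    Differentiable ℝ (fun (t : Fin d → ℝ) (i : Fin d) => Real.exp (t i)) := by
  apply differentiable_pi.2
  intro i
  exact Real.differentiable_exp.comp (differentiable_apply i)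

lemma coercive {S : Finset (Fin d → ℤ)} (hd : 0 < d)
    (hH1 : ∀ x : Fin d → ℝ, x ≠ 0 → ∃ s ∈ S, lin s x < 0) :
    ∃ c > 0, ∀ t : Fin d → ℝ, ∃ s ∈ S, c * ‖t‖ ≤ lin s t := by
  haveI : Nonempty (Fin d) := ⟨⟨0, hd⟩⟩
  have hone : (fun _ => (1 : ℝ)) ≠ (0 : Fin d → ℝ) := by
    intro h
    have := congrFun h ⟨0, hd⟩
    norm_num at this
  obtain ⟨s₁, hs₁S, -⟩ := hH1 _ hone
  have hSne : S.Nonempty := ⟨s₁, hs₁S⟩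
  set g : (Fin d → ℝ) → ℝ := fun u => S.sup' hSne (fun s => lin s u) with hg
  have hgc : Continuous g :=
    Continuous.finset_sup'_apply hSne fun s _ => lin_continuous s
  have hsph : (Metric.sphere (0 : Fin d → ℝ) 1).Nonempty :=
    NormedSpace.sphere_nonempty.2 zero_le_one
  obtain ⟨u₀, hu₀, hminu⟩ := (isCompact_sphere (0 : Fin d → ℝ) 1).exists_isMinOn hsph
    hgc.continuousOn
  have hc : 0 < g u₀ := by
    have hu₀ne : u₀ ≠ 0 := by
      intro h
      rw [mem_sphere_zero_iff_norm, h] at hu₀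
      norm_num at hu₀
    obtain ⟨s, hsS, hslt⟩ := hH1 (-u₀) (neg_ne_zero.2 hu₀ne)
    have : lin s (-u₀) = -lin s u₀ := by
      have := lin_smul s (-1) u₀
      simpa using this
    rw [this] at hslt
    have h1 : 0 < lin s u₀ := by linarith
    exact lt_of_lt_of_le h1 (Finset.le_sup' (fun s => lin s u₀) hsS)
  refine ⟨g u₀, hc, fun t => ?_⟩
  rcases eq_or_ne t 0 with rfl | ht
  · exact ⟨s₁, hs₁S, by simp [lin]⟩
  · have htn : ‖t‖ ≠ 0 := norm_ne_zero_iff.2 ht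
    set u : Fin d → ℝ := ‖t‖⁻¹ • t with hu
    have humem : u ∈ Metric.sphere (0 : Fin d → ℝ) 1 := by
      rw [mem_sphere_zero_iff_norm, hu, norm_smul]
      simp [inv_mul_cancel₀ htn]
    have h2 : g u₀ ≤ g u := hminu humem
    obtain ⟨s, hsS, hgu⟩ := Finset.exists_mem_eq_sup' hSne (fun s => lin s u)
    refine ⟨s, hsS, ?_⟩
    have h3 : g u₀ ≤ lin s u := by rw [← hgu]; exact h2
    have h4 : lin s t = ‖t‖ * lin s u := by
      rw [hu, lin_smul, ← mul_assoc, mul_inv_cancel₀ htn, one_mul]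
    rw [h4, mul_comm (g u₀) ‖t‖]
    exact mul_le_mul_of_nonneg_left h3 (norm_nonneg t)

end Stmt10Aux

/-- For an inventory `χ(x) = Σ_{s∈S} w(s) x^s` of a small step-set
`S ⊆ {−1,0,1}^d` with positive weights, satisfying the irreducibility assumption (H1),
`χ` attains a global minimum on the open positive orthant at a unique point `x₀`, which
is also the unique critical point of `χ` there. -/
theorem stmt10 {d : ℕ} (hd : 0 < d) {S : Finset (Fin d → ℤ)}
    (hS : ∀ s ∈ S, ∀ i, s i = -1 ∨ s i = 0 ∨ s i = 1)
    {w : (Fin d → ℤ) → ℝ} (hw : ∀ s ∈ S, 0 < w s)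
    (hH1 : ∀ x : Fin d → ℝ, x ≠ 0 → ∃ s ∈ S, (∑ i, x i * (s i : ℝ)) < 0) :
    ∃ x₀ : Fin d → ℝ, (∀ i, 0 < x₀ i) ∧
      (∀ x : Fin d → ℝ, (∀ i, 0 < x i) →
        (∑ s ∈ S, w s * ∏ i, x₀ i ^ (s i)) ≤ ∑ s ∈ S, w s * ∏ i, x i ^ (s i)) ∧
      fderiv ℝ (fun x : Fin d → ℝ => ∑ s ∈ S, w s * ∏ i, x i ^ (s i)) x₀ = 0 ∧
      (∀ y : Fin d → ℝ, (∀ i, 0 < y i) →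
        ((∀ x : Fin d → ℝ, (∀ i, 0 < x i) →
            (∑ s ∈ S, w s * ∏ i, y i ^ (s i)) ≤ ∑ s ∈ S, w s * ∏ i, x i ^ (s i)) ∨
          fderiv ℝ (fun x : Fin d → ℝ => ∑ s ∈ S, w s * ∏ i, x i ^ (s i)) y = 0) →
        y = x₀) := by
  classical
  haveI : Nonempty (Fin d) := ⟨⟨0, hd⟩⟩
  open Stmt10Aux in
  set χ : (Fin d → ℝ) → ℝ := fun x => ∑ s ∈ S, w s * ∏ i, x i ^ (s i) with hχdef
  set F : (Fin d → ℝ) → ℝ := Stmt10Aux.Fe S w with hFdef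
  set E : (Fin d → ℝ) → (Fin d → ℝ) := fun t i => Real.exp (t i) with hEdef
  -- translate (H1)
  have hH1' : ∀ x : Fin d → ℝ, x ≠ 0 → ∃ s ∈ S, Stmt10Aux.lin s x < 0 := by
    intro x hx
    obtain ⟨s, hsS, h⟩ := hH1 x hx
    refine ⟨s, hsS, ?_⟩
    have : Stmt10Aux.lin s x = ∑ i, x i * (s i : ℝ) :=
      Finset.sum_congr rfl fun i _ => mul_comm _ _
    rw [this]; exact h
  have hone : (fun _ => (1 : ℝ)) ≠ (0 : Fin d → ℝ) := by
    intro h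
    have := congrFun h ⟨0, hd⟩
    norm_num at this
  obtain ⟨s₁, hs₁S, -⟩ := hH1' _ hone
  have hSne : S.Nonempty := ⟨s₁, hs₁S⟩
  -- key identity
  have key : ∀ t : Fin d → ℝ, χ (E t) = F t := fun t => Stmt10Aux.chi_exp S w t
  have hEpos : ∀ (t : Fin d → ℝ) (i : Fin d), 0 < E t i := fun t i => Real.exp_pos _
  have hElog : ∀ x : Fin d → ℝ, (∀ i, 0 < x i) → E (fun i => Real.log (x i)) = x :=
    fun x hx => funext fun i => Real.exp_log (hx i)
  have chiX : ∀ x : Fin d → ℝ, (∀ i, 0 < x i) → χ x = F (fun i => Real.log (x i)) := by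
    intro x hx
    have := key (fun i => Real.log (x i))
    rw [hElog x hx] at this
    exact this
  -- coercivity
  obtain ⟨c, hc, hcoer⟩ := Stmt10Aux.coercive hd hH1'
  set wmin : ℝ := S.inf' hSne w with hwmin
  have hwminpos : 0 < wmin := (Finset.lt_inf'_iff hSne).2 fun s hs => hw s hs
  have hwmin_le : ∀ s ∈ S, wmin ≤ w s := fun s hs => Finset.inf'_le w hs
  have hFlb : ∀ t : Fin d → ℝ, wmin * Real.exp (c * ‖t‖) ≤ F t := by
    intro t
    obtain ⟨s, hsS, hcs⟩ := hcoer t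
    have h1 : wmin * Real.exp (c * ‖t‖) ≤ w s * Real.exp (Stmt10Aux.lin s t) :=
      mul_le_mul (hwmin_le s hsS) (Real.exp_le_exp.2 hcs) (Real.exp_pos _).le (hw s hsS).le
    have h2 : w s * Real.exp (Stmt10Aux.lin s t) ≤ ∑ s' ∈ S, w s' * Real.exp (Stmt10Aux.lin s' t) :=
      Finset.single_le_sum (f := fun s' => w s' * Real.exp (Stmt10Aux.lin s' t))
        (fun s' hs' => mul_nonneg (hw s' hs').le (Real.exp_pos _).le) hsS
    rw [hFdef]
    simp only [Stmt10Aux.Fe]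
    exact h1.trans h2
  have hF0 : 0 < F 0 := by
    rw [hFdef]
    simp only [Stmt10Aux.Fe]
    exact Finset.sum_pos (fun s hs => mul_pos (hw s hs) (Real.exp_pos _)) hSne
  set L0 : ℝ := Real.log (F 0 / wmin) with hL0
  set R : ℝ := |L0| / c + 1 with hR
  have hRpos : 0 < R := by positivity
  have hout : ∀ t : Fin d → ℝ, R ≤ ‖t‖ → F 0 ≤ F t := by
    intro t hRt
    have hcR : L0 ≤ c * R := by
      have h1 : c * R = |L0| + c := by
        rw [hR, mul_add, mul_one, mul_div_cancel₀ _ (ne_of_gt hc)]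
      rw [h1]
      have := le_abs_self L0
      linarith
    have h2 : F 0 / wmin ≤ Real.exp (c * R) := by
      rw [← Real.exp_log (div_pos hF0 hwminpos)]
      exact Real.exp_le_exp.2 hcR
    have h3 : F 0 ≤ wmin * Real.exp (c * R) := by
      rw [div_le_iff₀ hwminpos] at h2
      linarith
    have h4 : wmin * Real.exp (c * R) ≤ wmin * Real.exp (c * ‖t‖) := by
      apply mul_le_mul_of_nonneg_left _ hwminpos.le
      exact Real.exp_le_exp.2 (mul_le_mul_of_nonneg_left hRt hc.le)
    exact h3.trans (h4.trans (hFlb t))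
  -- minimum over the closed ball, hence global minimum
  have hcpt : IsCompact (Metric.closedBall (0 : Fin d → ℝ) R) := isCompact_closedBall _ _
  have h0ball : (0 : Fin d → ℝ) ∈ Metric.closedBall (0 : Fin d → ℝ) R := by
    simp [hRpos.le]
  obtain ⟨t₀, ht₀ball, ht₀min⟩ := hcpt.exists_isMinOn ⟨0, h0ball⟩
    (Stmt10Aux.Fe_continuous S w).continuousOn
  have hglob : ∀ t : Fin d → ℝ, F t₀ ≤ F t := by
    intro t
    by_cases h : t ∈ Metric.closedBall (0 : Fin d → ℝ) R
    · exact ht₀min h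
    · have h1 : R ≤ ‖t‖ := by
        rw [Metric.mem_closedBall, dist_zero_right] at h
        linarith [not_le.1 h]
      exact (ht₀min h0ball).trans (hout t h1)
  -- strict convexity
  have hspan : ∀ v : Fin d → ℝ, v ≠ 0 → ∃ s ∈ S, Stmt10Aux.lin s v ≠ 0 := by
    intro v hv
    obtain ⟨s, hsS, h⟩ := hH1' v hv
    exact ⟨s, hsS, ne_of_lt h⟩
  have hstrict : StrictConvexOn ℝ Set.univ F := Stmt10Aux.Fe_strictConvexOn hw hspan
  have ht₀minOn : IsMinOn F Set.univ t₀ := isMinOn_iff.2 fun t _ => hglob t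
  -- the minimizer
  refine ⟨E t₀, hEpos t₀, ?_, ?_, ?_⟩
  · intro x hx
    have h1 : χ (E t₀) ≤ χ x := by
      rw [key t₀, chiX x hx]
      exact hglob _
    exact h1
  · -- critical point
    have hU : IsOpen {x : Fin d → ℝ | ∀ i, 0 < x i} := by
      have : {x : Fin d → ℝ | ∀ i, 0 < x i} = ⋂ i, (fun x : Fin d → ℝ => x i) ⁻¹' Ioi 0 := by
        ext x; simp
      rw [this]
      exact isOpen_iInter_of_finite fun i => (continuous_apply i).isOpen_preimage _ isOpen_Ioi
    have hloc : IsLocalMin χ (E t₀) := by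
      refine Filter.eventually_of_mem (hU.mem_nhds (hEpos t₀)) ?_
      intro x hx
      rw [key t₀, chiX x hx]
      exact hglob _
    exact hloc.fderiv_eq_zero
  · -- uniqueness
    intro y hy hyp
    set ty : Fin d → ℝ := fun i => Real.log (y i) with hty
    have hEy : E ty = y := hElog y hy
    have hyminOn : IsMinOn F Set.univ ty := by
      rcases hyp with hmin | hcrit
      · refine isMinOn_iff.2 fun t _ => ?_
        have h1 : χ y ≤ χ (E t) := hmin (E t) (hEpos t)
        rw [chiX y hy, key t] at h1
        exact h1
      · -- critical point of χ at y gives critical point of F at ty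
        have hFcomp : F = χ ∘ E := funext fun t => (key t).symm
        have hχd : DifferentiableAt ℝ χ (E ty) := by
          rw [hEy]
          exact Stmt10Aux.chi_differentiableAt S w fun i => (hy i).ne'
        have hEd : DifferentiableAt ℝ E ty := Stmt10Aux.E_differentiable ty
        have hfd : fderiv ℝ F ty = (fderiv ℝ χ (E ty)).comp (fderiv ℝ E ty) := by
          rw [hFcomp]
          exact fderiv_comp ty hχd hEd
        rw [hEy, hcrit, ContinuousLinearMap.zero_comp] at hfd
        refine isMinOn_iff.2 fun t _ => ?_
        exact Stmt10Aux.isMinOn_of_fderiv_zero hstrict.convexOn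
          (Stmt10Aux.Fe_differentiable S w) hfd t
    have hteq : ty = t₀ := hstrict.eq_of_isMinOn hyminOn ht₀minOn (mem_univ _) (mem_univ _)
    rw [← hEy, hteq]
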